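/- Let A, U be symmetric positive definite n×n matrices, u ∈ ℝⁿ, and ω ∈ (0,1) with 1 − ω − uᵀU⁻¹u > 0. Then U ⪰ (1/ω)A + (1/(1−ω))uuᵀ if and only if the (n+1)×(n+1) matrix [[U⁻¹, −U⁻¹u],[(−U⁻¹u)ᵀ, uᵀU⁻¹u − 1]] − ω·[[A⁻¹, 0],[0ᵀ, −1]] is negative semidefinite. -/

import Mathlib

open Matrix
variable {n : ℕ}

lemma myPosSemidef_vecMulVec (v : Fin n → ℝ) : (vecMulVec v v).PosSemidef := by
  have h := Matrix.posSemidef_self_mul_conjTranspose (Matrix.replicateCol (Fin 1) v)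
  have hv : vecMulVec v v = Matrix.replicateCol (Fin 1) v * (Matrix.replicateCol (Fin 1) v)ᴴ := by
    ext i j
    simp [vecMulVec_apply, Matrix.mul_apply]
  rw [hv]
  exact h

lemma myPosSemidef_smul {M : Matrix (Fin n) (Fin n) ℝ} (hM : M.PosSemidef) {c : ℝ}
    (hc : 0 ≤ c) : (c • M).PosSemidef := by
  rw [posSemidef_iff_dotProduct_mulVec] at hM ⊢
  refine ⟨?_, fun x => ?_⟩
  · unfold Matrix.IsHermitian
    rw [conjTranspose_smul, hM.1]
    simp
  · have := hM.2 x
    rw [smul_mulVec, dotProduct_smul]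
    exact mul_nonneg hc this

lemma myPosDef_smul {M : Matrix (Fin n) (Fin n) ℝ} (hM : M.PosDef) {c : ℝ}
    (hc : 0 < c) : (c • M).PosDef := by
  rw [posDef_iff_dotProduct_mulVec] at hM ⊢
  refine ⟨?_, fun x hx => ?_⟩
  · unfold Matrix.IsHermitian
    rw [conjTranspose_smul, hM.1]
    simp
  · have := hM.2 hx
    rw [smul_mulVec, dotProduct_smul]
    exact mul_pos hc this

lemma my_inv_sub_iff {X Y : Matrix (Fin n) (Fin n) ℝ} (hX : X.PosDef) (hY : Y.PosDef) :
    (X - Y).PosSemidef ↔ (Y⁻¹ - X⁻¹).PosSemidef := by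
  haveI : Invertible X := hX.isUnit.invertible
  haveI : Invertible Y := hY.isUnit.invertible
  haveI : Invertible Y⁻¹ := hY.inv.isUnit.invertible
  have h1 := Matrix.PosDef.fromBlocks₁₁ (1 : Matrix (Fin n) (Fin n) ℝ) Y⁻¹ hX
  have h2 := Matrix.PosDef.fromBlocks₂₂ X (1 : Matrix (Fin n) (Fin n) ℝ) hY.inv
  simp only [conjTranspose_one, one_mul, mul_one, Matrix.inv_inv_of_invertible] at h1 h2
  rw [← h2, h1]

lemma my_mul_vecMulVec (M : Matrix (Fin n) (Fin n) ℝ) (a b : Fin n → ℝ) :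
    M * vecMulVec a b = vecMulVec (M *ᵥ a) b := by
  ext i j
  simp [Matrix.mul_apply, vecMulVec_apply, mulVec, dotProduct, Finset.sum_mul]
  exact Finset.sum_congr rfl fun k _ => by ring

lemma my_vecMulVec_mul (M : Matrix (Fin n) (Fin n) ℝ) (a b : Fin n → ℝ) :
    vecMulVec a b * M = vecMulVec a (Mᵀ *ᵥ b) := by
  ext i j
  simp [Matrix.mul_apply, vecMulVec_apply, mulVec, dotProduct, Finset.mul_sum]
  exact Finset.sum_congr rfl fun k _ => by ring

lemma my_vecMulVec_mul_vecMulVec (a b c d : Fin n → ℝ) :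
    vecMulVec a b * vecMulVec c d = (b ⬝ᵥ c) • vecMulVec a d := by
  ext i j
  simp [Matrix.mul_apply, vecMulVec_apply, dotProduct, Finset.sum_mul]
  exact Finset.sum_congr rfl fun k _ => by ring

theorem stmt13 {n : ℕ} (A U : Matrix (Fin n) (Fin n) ℝ)
    (hA : A.PosDef) (hU : U.PosDef) (u : Fin n → ℝ)
    (ω : ℝ) (h0 : 0 < ω) (h1 : ω < 1)
    (hnd : 0 < 1 - ω - u ⬝ᵥ (U⁻¹ *ᵥ u)) :
    (U - ((1 / ω) • A + (1 / (1 - ω)) • Matrix.vecMulVec u u)).PosSemidef ↔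
      (-(Matrix.fromBlocks U⁻¹ (Matrix.replicateCol (Fin 1) (-(U⁻¹ *ᵥ u)))
          (Matrix.replicateRow (Fin 1) (-(U⁻¹ *ᵥ u))) !![u ⬝ᵥ (U⁻¹ *ᵥ u) - 1]
        - ω • Matrix.fromBlocks A⁻¹ 0 0 !![(-1 : ℝ)])).PosSemidef := by
  have hω1 : (0:ℝ) < 1 - ω := by linarith
  have hUdet : IsUnit U.det := (Matrix.isUnit_iff_isUnit_det U).1 hU.isUnit
  have hAdet : IsUnit A.det := (Matrix.isUnit_iff_isUnit_det A).1 hA.isUnit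
  set w : Fin n → ℝ := U⁻¹ *ᵥ u with hw
  set s : ℝ := u ⬝ᵥ w with hs
  set d : ℝ := 1 - ω - s with hd
  have hdpos : 0 < d := hnd
  -- the matrix C
  set C : Matrix (Fin n) (Fin n) ℝ := U⁻¹ + d⁻¹ • vecMulVec w w with hC
  have hCpd : C.PosDef :=
    hU.inv.add_posSemidef (myPosSemidef_smul (myPosSemidef_vecMulVec w) (by positivity))
  have hCdet : IsUnit C.det := (Matrix.isUnit_iff_isUnit_det C).1 hCpd.isUnit
  -- the matrix V
  set V : Matrix (Fin n) (Fin n) ℝ := U - (1/(1-ω)) • vecMulVec u u with hV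
  have hUinvT : U⁻¹ᵀ = U⁻¹ := by
    rw [← Matrix.conjTranspose_eq_transpose_of_trivial]
    exact hU.isHermitian.inv
  have hUw : U *ᵥ w = u := by
    rw [hw, mulVec_mulVec, Matrix.mul_nonsing_inv _ hUdet, one_mulVec]
  have hcoef : d⁻¹ - 1/(1-ω) - 1/(1-ω) * (d⁻¹ * s) = 0 := by
    rw [hd]
    field_simp [show (1 - ω - s) ≠ 0 from hdpos.ne']
    ring
  have hVC : V * C = 1 := by
    rw [hV, hC, Matrix.sub_mul, Matrix.mul_add, Matrix.mul_add, Matrix.mul_smul,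
      Matrix.smul_mul, Matrix.smul_mul, Matrix.mul_smul,
      my_mul_vecMulVec, my_vecMulVec_mul, my_vecMulVec_mul_vecMulVec,
      Matrix.mul_nonsing_inv _ hUdet, hUw, hUinvT, ← hw, ← hs]
    have : (1:Matrix (Fin n) (Fin n) ℝ) + d⁻¹ • vecMulVec u w -
        ((1/(1-ω)) • vecMulVec u w + (1/(1-ω)) • d⁻¹ • s • vecMulVec u w) =
        1 + (d⁻¹ - 1/(1-ω) - 1/(1-ω) * (d⁻¹ * s)) • vecMulVec u w := by
      module
    rw [this, hcoef, zero_smul, add_zero]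
  have hCinv : C⁻¹ = V := Matrix.inv_eq_left_inv hVC
  have hVpd : V.PosDef := hCinv ▸ hCpd.inv
  have hVinv : V⁻¹ = C := by
    rw [← hCinv, Matrix.nonsing_inv_nonsing_inv _ hCdet]
  -- the matrix Y
  set Y : Matrix (Fin n) (Fin n) ℝ := (1/ω) • A with hY
  have hYpd : Y.PosDef := myPosDef_smul hA (by positivity)
  have hYinv : Y⁻¹ = ω • A⁻¹ := by
    refine Matrix.inv_eq_right_inv ?_
    rw [hY, Matrix.smul_mul, Matrix.mul_smul, smul_smul, Matrix.mul_nonsing_inv _ hAdet,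
      one_div_mul_cancel h0.ne', one_smul]
  -- LHS
  have hLmat : U - ((1 / ω) • A + (1 / (1 - ω)) • Matrix.vecMulVec u u) = V - Y := by
    rw [hV, hY]; abel
  have hLHS : (U - ((1 / ω) • A + (1 / (1 - ω)) • Matrix.vecMulVec u u)).PosSemidef ↔
      (ω • A⁻¹ - C).PosSemidef := by
    rw [hLmat, my_inv_sub_iff hVpd hYpd, hYinv, hVinv]
  -- RHS
  have hRmat : -(Matrix.fromBlocks U⁻¹ (Matrix.replicateCol (Fin 1) (-w))
          (Matrix.replicateRow (Fin 1) (-w)) !![s - 1]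
        - ω • Matrix.fromBlocks A⁻¹ 0 0 !![(-1 : ℝ)]) =
      Matrix.fromBlocks (ω • A⁻¹ - U⁻¹) (Matrix.replicateCol (Fin 1) w)
        (Matrix.replicateRow (Fin 1) w) !![d] := by
    rw [hd]
    ext (i | i) (j | j) <;>
      simp [Matrix.fromBlocks, Matrix.replicateCol, Matrix.replicateRow, Matrix.sub_apply, Matrix.smul_apply] <;>
      ring
  have hdPD : (!![d] : Matrix (Fin 1) (Fin 1) ℝ).PosDef := by
    have hdiag : (!![d] : Matrix (Fin 1) (Fin 1) ℝ) = Matrix.diagonal ![d] := by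
      ext i j
      fin_cases i <;> fin_cases j <;> simp
    rw [hdiag]
    exact Matrix.posDef_diagonal_iff.mpr fun i => by fin_cases i <;> simpa using hdpos
  haveI : Invertible (!![d] : Matrix (Fin 1) (Fin 1) ℝ) := hdPD.isUnit.invertible
  have hrow : Matrix.replicateRow (Fin 1) w = (Matrix.replicateCol (Fin 1) w)ᴴ := by
    rw [Matrix.conjTranspose_replicateCol]
    simp
  have hdinv : (!![d] : Matrix (Fin 1) (Fin 1) ℝ)⁻¹ = !![d⁻¹] := by
    refine Matrix.inv_eq_right_inv ?_
    ext i j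
    fin_cases i <;> fin_cases j <;>
      simp [Matrix.mul_apply, Fin.sum_univ_one, mul_inv_cancel₀ hdpos.ne']
  have hschur : Matrix.replicateCol (Fin 1) w * (!![d] : Matrix (Fin 1) (Fin 1) ℝ)⁻¹ *
      (Matrix.replicateCol (Fin 1) w)ᴴ = d⁻¹ • vecMulVec w w := by
    rw [hdinv]
    ext i j
    simp [Matrix.mul_apply, Fin.sum_univ_one, Matrix.replicateCol, Matrix.replicateRow, vecMulVec_apply]
    ring
  have hRHS : (-(Matrix.fromBlocks U⁻¹ (Matrix.replicateCol (Fin 1) (-w))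
          (Matrix.replicateRow (Fin 1) (-w)) !![s - 1]
        - ω • Matrix.fromBlocks A⁻¹ 0 0 !![(-1 : ℝ)])).PosSemidef ↔
      (ω • A⁻¹ - C).PosSemidef := by
    rw [hRmat, hrow, Matrix.PosDef.fromBlocks₂₂ _ _ hdPD, hschur, hC, sub_sub]
  rw [hLHS, hRHS]
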